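/- Let μ = 1 if rank(G₀) = m = n, μ = √2 if rank(G₀) = min(m, n) and m ≠ n, and μ = (1 + √5)/2 if rank(G₀) < min(m, n). Suppose x ∈ ℝⁿ satisfies (L_f + L_G)·‖x‖ ≤ σ. For a unit vector d ∈ Im(G₀), define K(d) = (σ − L_G‖x‖ − L_f‖x‖) / (‖G₀†d‖·(σ − L_G‖x‖) + μ·σ⁻¹·L_G‖x‖). Then for every unit vector d ∈ Im(R), every real k with 0 ≤ k ≤ K(d), and every consistent pair (f̂, Ĝ), there exists u ∈ ℝᵐ with ‖u‖ ≤ 1 such that f₀ + k·d = f̂(x) + Ĝ(x)·u; that is, f₀ + k·d belongs to the guaranteed velocity set V^G_x. -/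

import Mathlib

open Matrix Set
open scoped RealInnerProductSpace

noncomputable def matOpNorm {n m : ℕ} (M : Matrix (Fin n) (Fin m) ℝ) : ℝ :=
  ‖LinearMap.toContinuousLinearMap (Matrix.toEuclideanLin M)‖

noncomputable def appMat {n m : ℕ} (M : Matrix (Fin n) (Fin m) ℝ)
    (v : EuclideanSpace ℝ (Fin m)) : EuclideanSpace ℝ (Fin n) :=
  Matrix.toEuclideanLin M v

noncomputable def colSpace {n m : ℕ} (M : Matrix (Fin n) (Fin m) ℝ) :
    Submodule ℝ (EuclideanSpace ℝ (Fin n)) :=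
  LinearMap.range (Matrix.toEuclideanLin M)

noncomputable def minSV {n m : ℕ} (M : Matrix (Fin n) (Fin m) ℝ) : ℝ :=
  Real.sqrt (sInf {μ : ℝ | μ ≠ 0 ∧
    ∃ i, (Matrix.isHermitian_conjTranspose_mul_self M).eigenvalues i = μ})

/-- A pair `(fh, Gh)` consistent with the prior knowledge of the dynamics. -/
structure Consistent {n m : ℕ} (R : Matrix (Fin n) (Fin m) ℝ) (Lf LG : ℝ)
    (f₀ : EuclideanSpace ℝ (Fin n)) (G₀ : Matrix (Fin n) (Fin m) ℝ)
    (fh : EuclideanSpace ℝ (Fin n) → EuclideanSpace ℝ (Fin n))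
    (Gh : EuclideanSpace ℝ (Fin n) → Matrix (Fin n) (Fin m) ℝ) : Prop where
  lipf : ∀ y z, ‖fh y - fh z‖ ≤ Lf * ‖y - z‖
  lipG : ∀ y z, matOpNorm (Gh y - Gh z) ≤ LG * ‖y - z‖
  f_zero : fh 0 = f₀
  G_zero : Gh 0 = G₀
  f_im : ∀ y, fh y ∈ colSpace R
  factor : ∃ Hh : EuclideanSpace ℝ (Fin n) → Matrix (Fin m) (Fin m) ℝ,
    IsUnit (Hh 0) ∧ ∀ y, Gh y = R * Hh y

/-- The guaranteed velocity set at `x`. -/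
noncomputable def GVS {n m : ℕ} (R : Matrix (Fin n) (Fin m) ℝ) (Lf LG : ℝ)
    (f₀ : EuclideanSpace ℝ (Fin n)) (G₀ : Matrix (Fin n) (Fin m) ℝ)
    (x : EuclideanSpace ℝ (Fin n)) : Set (EuclideanSpace ℝ (Fin n)) :=
  ⋂ (fh : EuclideanSpace ℝ (Fin n) → EuclideanSpace ℝ (Fin n))
    (Gh : EuclideanSpace ℝ (Fin n) → Matrix (Fin n) (Fin m) ℝ)
    (_ : Consistent R Lf LG f₀ G₀ fh Gh),
      {w | ∃ u : EuclideanSpace ℝ (Fin m), ‖u‖ ≤ 1 ∧ w = fh x + appMat (Gh x) u}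

section Aux

lemma appMat_norm_le {n m : ℕ} (M : Matrix (Fin n) (Fin m) ℝ)
    (v : EuclideanSpace ℝ (Fin m)) : ‖appMat M v‖ ≤ matOpNorm M * ‖v‖ :=
  (LinearMap.toContinuousLinearMap (Matrix.toEuclideanLin M)).le_opNorm v

lemma appMat_sub {n m : ℕ} (M N : Matrix (Fin n) (Fin m) ℝ) (v : EuclideanSpace ℝ (Fin m)) :
    appMat (M - N) v = appMat M v - appMat N v := by
  simp [appMat]

lemma appMat_mul {n m k : ℕ} (M : Matrix (Fin n) (Fin k) ℝ) (N : Matrix (Fin k) (Fin m) ℝ)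
    (v : EuclideanSpace ℝ (Fin m)) : appMat (M * N) v = appMat M (appMat N v) := by
  simp [appMat, Matrix.toEuclideanLin_apply, Matrix.mulVec_mulVec]

lemma appMat_smul {n m : ℕ} (M : Matrix (Fin n) (Fin m) ℝ) (c : ℝ) (v : EuclideanSpace ℝ (Fin m)) :
    appMat M (c • v) = c • appMat M v := by simp [appMat]

lemma appMat_add_vec {n m : ℕ} (M : Matrix (Fin n) (Fin m) ℝ) (v w : EuclideanSpace ℝ (Fin m)) :
    appMat M (v + w) = appMat M v + appMat M w := by simp [appMat]

lemma matOpNorm_sub_comm {n m : ℕ} (M N : Matrix (Fin n) (Fin m) ℝ) :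
    matOpNorm (M - N) = matOpNorm (N - M) := by
  unfold matOpNorm
  rw [show M - N = -(N - M) from (neg_sub N M).symm, map_neg, map_neg, norm_neg]

lemma transpose_adjoint {n m : ℕ} (M : Matrix (Fin n) (Fin m) ℝ) :
    Matrix.toEuclideanLin Mᵀ = LinearMap.adjoint (Matrix.toEuclideanLin M) := by
  rw [← Matrix.toEuclideanLin_conjTranspose_eq_adjoint,
    Matrix.conjTranspose_eq_transpose_of_trivial]

end Aux

section spec
variable {n m : ℕ} (M : Matrix (Fin n) (Fin m) ℝ)

local notation "N" => Mᴴ * M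
local notation "hN" => Matrix.isHermitian_conjTranspose_mul_self M

lemma eigen_appMat (i : Fin m) :
    appMat N ((hN).eigenvectorBasis i) = (hN).eigenvalues i • (hN).eigenvectorBasis i := by
  have := (hN).mulVec_eigenvectorBasis i
  ext j
  have := congrFun this j
  simpa [appMat, Matrix.toEuclideanLin_apply] using this

lemma adjoint_N : LinearMap.adjoint (Matrix.toEuclideanLin N) = Matrix.toEuclideanLin N := by
  rw [← Matrix.toEuclideanLin_conjTranspose_eq_adjoint, (hN).eq]

lemma inner_N (v : EuclideanSpace ℝ (Fin m)) :
    ⟪v, appMat N v⟫ = ‖appMat M v‖ ^ 2 := by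
  have : appMat N v = Matrix.toEuclideanLin Mᴴ (Matrix.toEuclideanLin M v) := by
    simp [appMat, Matrix.toEuclideanLin_apply, Matrix.mulVec_mulVec]
  rw [this, Matrix.conjTranspose_eq_transpose_of_trivial, transpose_adjoint,
    LinearMap.adjoint_inner_right]
  rw [real_inner_self_eq_norm_sq]
  rfl

lemma repr_N (v : EuclideanSpace ℝ (Fin m)) (i : Fin m) :
    (hN).eigenvectorBasis.repr (appMat N v) i
      = (hN).eigenvalues i * (hN).eigenvectorBasis.repr v i := by
  rw [OrthonormalBasis.repr_apply_apply, OrthonormalBasis.repr_apply_apply]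
  have : ⟪(hN).eigenvectorBasis i, appMat N v⟫
      = ⟪appMat N ((hN).eigenvectorBasis i), v⟫ := by
    show ⟪_, Matrix.toEuclideanLin N v⟫ = _
    rw [← adjoint_N M, LinearMap.adjoint_inner_right]; rfl
  rw [this, eigen_appMat, inner_smul_left]
  simp [real_inner_comm]

lemma inner_coords (x y : EuclideanSpace ℝ (Fin m)) : ⟪x, y⟫ = ∑ i, x i * y i := by
  simp [PiLp.inner_apply, RCLike.inner_apply]
  exact Finset.sum_congr rfl fun i _ => mul_comm _ _

lemma inner_N_sum (v : EuclideanSpace ℝ (Fin m)) :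
    ‖appMat M v‖ ^ 2 = ∑ i, (hN).eigenvalues i * ((hN).eigenvectorBasis.repr v i) ^ 2 := by
  rw [← inner_N]
  rw [← (hN).eigenvectorBasis.repr.inner_map_map v (appMat N v)]
  rw [inner_coords]
  refine Finset.sum_congr rfl fun i _ => ?_
  rw [repr_N]; ring

lemma norm_sq_coords (v : EuclideanSpace ℝ (Fin m)) :
    ‖v‖ ^ 2 = ∑ i, ((hN).eigenvectorBasis.repr v i) ^ 2 := by
  rw [← real_inner_self_eq_norm_sq, ← (hN).eigenvectorBasis.repr.inner_map_map v v, inner_coords]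
  refine Finset.sum_congr rfl fun i _ => (sq _).symm

lemma eigen_eq_norm (i : Fin m) :
    (hN).eigenvalues i = ‖appMat M ((hN).eigenvectorBasis i)‖ ^ 2 := by
  rw [inner_N_sum]
  rw [Finset.sum_eq_single i]
  · simp [OrthonormalBasis.repr_self, EuclideanSpace.single_apply]
  · intro j _ hj
    simp [OrthonormalBasis.repr_self, EuclideanSpace.single_apply, hj]
  · simp

lemma eigen_nonneg (i : Fin m) : 0 ≤ (hN).eigenvalues i := by
  rw [eigen_eq_norm]; positivity

lemma eigen_zero_app (i : Fin m) (h : (hN).eigenvalues i = 0) :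
    appMat M ((hN).eigenvectorBasis i) = 0 := by
  have := (eigen_eq_norm M i).symm.trans h
  rwa [pow_eq_zero_iff (by norm_num), norm_eq_zero] at this

lemma exists_eigen_ne_zero (hM : M ≠ 0) : ∃ i, (hN).eigenvalues i ≠ 0 := by
  by_contra h
  push_neg at h
  apply hM
  have hzero : ∀ v, appMat M v = 0 := fun v => by
    have h2 := inner_N_sum M v
    rw [Finset.sum_eq_zero fun i _ => by rw [h i, zero_mul]] at h2
    exact norm_eq_zero.mp (pow_eq_zero_iff (n := 2) (by norm_num) |>.mp h2)
  have : Matrix.toEuclideanLin M = 0 := LinearMap.ext fun v => hzero v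
  exact Matrix.toEuclideanLin.map_eq_zero_iff.mp this

lemma sInf_mem (hM : M ≠ 0) :
    sInf {μ : ℝ | μ ≠ 0 ∧ ∃ i, (hN).eigenvalues i = μ} ∈
      {μ : ℝ | μ ≠ 0 ∧ ∃ i, (hN).eigenvalues i = μ} := by
  obtain ⟨i, hi⟩ := exists_eigen_ne_zero M hM
  exact Set.Nonempty.csInf_mem ⟨_, hi, i, rfl⟩
    ((Set.finite_range (hN).eigenvalues).subset (fun μ hμ => hμ.2))

lemma sInf_pos (hM : M ≠ 0) :
    0 < sInf {μ : ℝ | μ ≠ 0 ∧ ∃ i, (hN).eigenvalues i = μ} := by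
  obtain ⟨hne, i, hi⟩ := sInf_mem M hM
  exact lt_of_le_of_ne (hi ▸ eigen_nonneg M i) (Ne.symm hne)

lemma minSV_pos (hM : M ≠ 0) : 0 < minSV M := Real.sqrt_pos.mpr (sInf_pos M hM)

lemma minSV_sq (hM : M ≠ 0) :
    minSV M ^ 2 = sInf {μ : ℝ | μ ≠ 0 ∧ ∃ i, (hN).eigenvalues i = μ} :=
  Real.sq_sqrt (le_of_lt (sInf_pos M hM))

lemma minSV_le_eigen (hM : M ≠ 0) (i : Fin m) (h : (hN).eigenvalues i ≠ 0) :
    minSV M ^ 2 ≤ (hN).eigenvalues i := by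
  rw [minSV_sq M hM]
  exact csInf_le (((Set.finite_range (hN).eigenvalues).subset
    (fun μ hμ => hμ.2)).bddBelow) ⟨h, i, rfl⟩

lemma minSV_bound (hM : M ≠ 0) (z : EuclideanSpace ℝ (Fin n)) :
    minSV M * ‖appMat Mᵀ z‖ ≤ ‖appMat M (appMat Mᵀ z)‖ := by
  set w := appMat Mᵀ z with hw
  have hc : ∀ i, (hN).eigenvalues i = 0 → (hN).eigenvectorBasis.repr w i = 0 := by
    intro i hi
    rw [OrthonormalBasis.repr_apply_apply]
    show ⟪_, Matrix.toEuclideanLin Mᵀ z⟫ = 0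
    rw [transpose_adjoint, LinearMap.adjoint_inner_right]
    have h0 : Matrix.toEuclideanLin M ((hN).eigenvectorBasis i) = 0 := eigen_zero_app M i hi
    rw [h0]
    simp
  have key : minSV M ^ 2 * ‖w‖ ^ 2 ≤ ‖appMat M w‖ ^ 2 := by
    rw [inner_N_sum M w, norm_sq_coords M w, Finset.mul_sum]
    apply Finset.sum_le_sum
    intro i _
    rcases eq_or_ne ((hN).eigenvalues i) 0 with h0 | h0
    · rw [hc i h0, h0]; simp
    · exact mul_le_mul_of_nonneg_right (minSV_le_eigen M hM i h0) (sq_nonneg _)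
  have h1 : 0 ≤ minSV M * ‖w‖ := mul_nonneg (le_of_lt (minSV_pos M hM)) (norm_nonneg _)
  nlinarith [norm_nonneg (appMat M w)]

end spec

lemma colSpace_finrank {n m : ℕ} (M : Matrix (Fin n) (Fin m) ℝ) :
    Module.finrank ℝ (colSpace M) = M.rank := by
  have h : colSpace M = Submodule.map
      ((WithLp.linearEquiv 2 ℝ (Fin n → ℝ)).symm : (Fin n → ℝ) →ₗ[ℝ] EuclideanSpace ℝ (Fin n))
      (LinearMap.range M.mulVecLin) := by
    ext v
    constructor
    · rintro ⟨u, rfl⟩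
      exact ⟨M *ᵥ (WithLp.equiv 2 _) u, ⟨_, rfl⟩, rfl⟩
    · rintro ⟨y, ⟨u, rfl⟩, rfl⟩
      exact ⟨(WithLp.equiv 2 _).symm u, by simp [Matrix.toEuclideanLin_apply]⟩
  rw [h, LinearEquiv.finrank_map_eq]
  rfl

lemma exists_preimage {n m : ℕ} (B : Matrix (Fin n) (Fin m) ℝ)
    (S : Submodule ℝ (EuclideanSpace ℝ (Fin m))) (Rng : Submodule ℝ (EuclideanSpace ℝ (Fin n)))
    (hmem : ∀ s : EuclideanSpace ℝ (Fin m), appMat B s ∈ Rng)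
    (hdim : Module.finrank ℝ S = Module.finrank ℝ Rng)
    (c : ℝ) (hc : 0 < c)
    (hlow : ∀ s ∈ S, c * ‖s‖ ≤ ‖appMat B s‖) :
    ∀ v ∈ Rng, ∃ s ∈ S, appMat B s = v ∧ c * ‖s‖ ≤ ‖v‖ := by
  set T : S →ₗ[ℝ] Rng := LinearMap.codRestrict Rng
    ((Matrix.toEuclideanLin B).comp S.subtype) (fun s => hmem s) with hT
  have hinj : Function.Injective T := by
    rw [← LinearMap.ker_eq_bot, Submodule.eq_bot_iff]
    rintro ⟨s, hs⟩ h0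
    have hB : appMat B s = 0 := by
      have := congrArg Subtype.val h0
      exact this
    have := hlow s hs
    rw [hB, norm_zero] at this
    have hsz : ‖s‖ = 0 := le_antisymm (nonpos_of_mul_nonpos_right this hc) (norm_nonneg s)
    exact Subtype.ext (norm_eq_zero.mp hsz)
  have hsurj : Function.Surjective T :=
    (LinearMap.injective_iff_surjective_of_finrank_eq_finrank hdim).mp hinj
  intro v hv
  obtain ⟨s, hs⟩ := hsurj ⟨v, hv⟩
  have hBs : appMat B (s : EuclideanSpace ℝ (Fin m)) = v := congrArg Subtype.val hs
  refine ⟨s, s.2, hBs, ?_⟩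
  rw [← hBs]
  exact hlow s s.2


/-- **Theorem 2.** With `μ` determined by the rank of `G₀`, for
`(L_f + L_G)‖x‖ ≤ σ`, every unit direction `d ∈ Im R` and every
`0 ≤ k ≤ K(d)`, the point `f₀ + k • d` is achieved by every consistent pair with
an admissible control, i.e. it belongs to the GVS at `x`.  Here `G₀† d` is
formalized as the unique `w ∈ Im G₀ᵀ` with `G₀ w = d`. -/
theorem theorem2_advanced_underapprox {n m : ℕ} (R : Matrix (Fin n) (Fin m) ℝ)
    (Lf LG : ℝ) (hLf : 0 < Lf) (hLG : 0 < LG)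
    (f₀ : EuclideanSpace ℝ (Fin n)) (hf₀ : f₀ ∈ colSpace R)
    (H₀ : Matrix (Fin m) (Fin m) ℝ) (hH₀ : IsUnit H₀)
    (G₀ : Matrix (Fin n) (Fin m) ℝ) (hG₀fac : G₀ = R * H₀) (hG₀ : G₀ ≠ 0)
    (μ : ℝ)
    (hμ : μ = if G₀.rank = m ∧ m = n then 1
      else if G₀.rank = min m n then Real.sqrt 2
      else (1 + Real.sqrt 5) / 2)
    (x : EuclideanSpace ℝ (Fin n)) (hx : (Lf + LG) * ‖x‖ ≤ minSV G₀) :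
    ∀ d : EuclideanSpace ℝ (Fin n), ‖d‖ = 1 → d ∈ colSpace R →
      ∀ w : EuclideanSpace ℝ (Fin m), w ∈ colSpace G₀ᵀ → appMat G₀ w = d →
        ∀ k : ℝ, 0 ≤ k →
          k ≤ (minSV G₀ - LG * ‖x‖ - Lf * ‖x‖) /
            (‖w‖ * (minSV G₀ - LG * ‖x‖) + μ * (minSV G₀)⁻¹ * (LG * ‖x‖)) →
          ∀ fh Gh, Consistent R Lf LG f₀ G₀ fh Gh →
            ∃ u : EuclideanSpace ℝ (Fin m), ‖u‖ ≤ 1 ∧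
              f₀ + k • d = fh x + appMat (Gh x) u := by
  intro d hd hdR w hwS hGw k hk0 hkK fh Gh hcons
  set σ := minSV G₀ with hσdef
  set L := LG * ‖x‖ with hLdef
  set B := Gh x with hBdef
  clear_value σ L B
  have hσ : 0 < σ := by rw [hσdef]; exact minSV_pos G₀ hG₀
  have hL0 : 0 ≤ L := by rw [hLdef]; exact mul_nonneg hLG.le (norm_nonneg x)
  -- σ - L > 0
  have hσL : 0 < σ - L := by
    rcases eq_or_ne x 0 with hx0 | hx0
    · simp [hLdef, hx0]; linarith
    · have hxp : 0 < ‖x‖ := norm_pos_iff.mpr hx0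
      have : Lf * ‖x‖ + LG * ‖x‖ ≤ σ := by nlinarith
      nlinarith
  -- μ ≥ 1
  have hμ1 : 1 ≤ μ := by
    have h5 : (1:ℝ) ≤ Real.sqrt 5 := by
      rw [show (1:ℝ) = Real.sqrt 1 from (Real.sqrt_one).symm]
      exact Real.sqrt_le_sqrt (by norm_num)
    have hsq2 : (1:ℝ) ≤ Real.sqrt 2 := by
      rw [show (1:ℝ) = Real.sqrt 1 from (Real.sqrt_one).symm]
      exact Real.sqrt_le_sqrt (by norm_num)
    rw [hμ]
    split_ifs
    · norm_num
    · exact hsq2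
    · linarith
  -- Lipschitz facts at x
  have hBdiff : matOpNorm (B - G₀) ≤ L := by
    rw [hBdef, hLdef]
    have := hcons.lipG x 0
    rwa [hcons.G_zero, sub_zero] at this
  have hF : ‖f₀ - fh x‖ ≤ Lf * ‖x‖ := by
    have := hcons.lipf 0 x
    rwa [hcons.f_zero, zero_sub, norm_neg] at this
  -- lower bound for G₀ on colSpace G₀ᵀ
  have hSlow : ∀ s ∈ colSpace G₀ᵀ, σ * ‖s‖ ≤ ‖appMat G₀ s‖ := by
    rintro s ⟨z, rfl⟩
    rw [hσdef]
    exact minSV_bound G₀ hG₀ z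
  -- lower bound for B on colSpace G₀ᵀ
  have hBlow : ∀ s ∈ colSpace G₀ᵀ, (σ - L) * ‖s‖ ≤ ‖appMat B s‖ := by
    intro s hs
    have h1 : ‖appMat (B - G₀) s‖ ≤ L * ‖s‖ :=
      (appMat_norm_le _ _).trans (mul_le_mul_of_nonneg_right hBdiff (norm_nonneg s))
    have h2 : σ * ‖s‖ ≤ ‖appMat G₀ s‖ := hSlow s hs
    have h3 : ‖appMat G₀ s‖ ≤ ‖appMat B s‖ + ‖appMat (B - G₀) s‖ := by
      have : appMat G₀ s = appMat B s - appMat (B - G₀) s := by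
        rw [appMat_sub]; abel
      rw [this]
      exact (norm_sub_le _ _)
    nlinarith
  -- B maps into colSpace R
  obtain ⟨Hh, hHh0, hfac⟩ := hcons.factor
  have hmemB : ∀ s, appMat B s ∈ colSpace R := by
    intro s
    rw [hBdef, hfac x, appMat_mul]
    exact ⟨_, rfl⟩
  -- dimensions agree
  have hdim : Module.finrank ℝ (colSpace G₀ᵀ) = Module.finrank ℝ (colSpace R) := by
    rw [colSpace_finrank, colSpace_finrank, Matrix.rank_transpose, hG₀fac,
      Matrix.rank_mul_eq_left_of_isUnit_det _ _ ((Matrix.isUnit_iff_isUnit_det H₀).mp hH₀)]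
  have solver := exists_preimage B (colSpace G₀ᵀ) (colSpace R) hmemB hdim (σ - L) hσL hBlow
  -- first preimage: f₀ - fh x
  have hv₁ : f₀ - fh x ∈ colSpace R := Submodule.sub_mem _ hf₀ (hcons.f_im x)
  obtain ⟨s₁, hs₁S, hs₁B, hs₁n⟩ := solver (f₀ - fh x) hv₁
  -- second preimage: d - B w
  have hv₂ : d - appMat B w ∈ colSpace R := Submodule.sub_mem _ hdR (hmemB w)
  obtain ⟨s₂, hs₂S, hs₂B, hs₂n⟩ := solver (d - appMat B w) hv₂
  have hne : ‖d - appMat B w‖ ≤ L * ‖w‖ := by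
    have : d - appMat B w = appMat (G₀ - B) w := by rw [appMat_sub, hGw]
    rw [this]
    refine (appMat_norm_le _ _).trans ?_
    rw [matOpNorm_sub_comm]
    exact mul_le_mul_of_nonneg_right hBdiff (norm_nonneg w)
  -- ‖w‖ ≤ σ⁻¹
  have hwσ : σ * ‖w‖ ≤ 1 := by
    have := hSlow w hwS
    rw [hGw, hd] at this
    exact this
  have hw0 : 0 < ‖w‖ := by
    rcases eq_or_ne w 0 with h | h
    · exfalso
      rw [h] at hGw
      have : d = 0 := by rw [← hGw]; simp [appMat]
      rw [this, norm_zero] at hd; norm_num at hd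
    · exact norm_pos_iff.mpr h
  -- the control
  refine ⟨s₁ + k • (w + s₂), ?_, ?_⟩
  · -- norm bound
    have hn1 : (σ - L) * ‖s₁‖ ≤ Lf * ‖x‖ := le_trans hs₁n hF
    have hn2 : (σ - L) * ‖s₂‖ ≤ L * ‖w‖ := le_trans hs₂n hne
    have hσinv : 0 < σ⁻¹ := inv_pos.mpr hσ
    have hwinv : ‖w‖ ≤ σ⁻¹ := by
      rw [show σ⁻¹ = 1 / σ by ring, le_div_iff₀ hσ]
      linarith [hwσ, mul_comm ‖w‖ σ]
    have hD : 0 < ‖w‖ * (σ - L) + μ * σ⁻¹ * L := by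
      have h1 : 0 < ‖w‖ * (σ - L) := mul_pos hw0 hσL
      have h2 : 0 ≤ μ * σ⁻¹ * L :=
        mul_nonneg (mul_nonneg (le_trans zero_le_one hμ1) hσinv.le) hL0
      linarith
    have hkD : k * (‖w‖ * (σ - L) + μ * σ⁻¹ * L) ≤ σ - L - Lf * ‖x‖ :=
      (le_div_iff₀ hD).mp hkK
    have htri : ‖s₁ + k • (w + s₂)‖ ≤ ‖s₁‖ + k * (‖w‖ + ‖s₂‖) := by
      have t1 : ‖s₁ + k • (w + s₂)‖ ≤ ‖s₁‖ + ‖k • (w + s₂)‖ := norm_add_le _ _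
      have t2 : ‖k • (w + s₂)‖ = k * ‖w + s₂‖ := by
        rw [norm_smul, Real.norm_eq_abs, abs_of_nonneg hk0]
      have t3 : ‖w + s₂‖ ≤ ‖w‖ + ‖s₂‖ := norm_add_le _ _
      have t4 := mul_le_mul_of_nonneg_left t3 hk0
      linarith
    have hL_w : L * ‖w‖ ≤ μ * σ⁻¹ * L := by
      have h1 : ‖w‖ ≤ μ * σ⁻¹ := hwinv.trans (le_mul_of_one_le_left hσinv.le hμ1)
      have h2 := mul_le_mul_of_nonneg_left h1 hL0
      linarith [h2]
    have key : (σ - L) * (‖s₁‖ + k * (‖w‖ + ‖s₂‖)) ≤ σ - L := by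
      have a1 := mul_le_mul_of_nonneg_left hn2 hk0
      have a2 := mul_le_mul_of_nonneg_left hL_w hk0
      linarith [a1, a2, hn1, hkD]
    by_contra hcon
    push_neg at hcon
    have hlt := mul_lt_mul_of_pos_left hcon hσL
    have hle := mul_le_mul_of_nonneg_left htri hσL.le
    linarith
  · -- the equation
    have : appMat B (s₁ + k • (w + s₂)) = (f₀ - fh x) + k • d := by
      rw [appMat_add_vec, appMat_smul, appMat_add_vec, hs₁B, hs₂B]
      congr 1
      rw [show appMat B w + (d - appMat B w) = d by abel]
    rw [this]
    abel
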